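/- Let P be a path on n vertices v_1,...,v_n, let d ≥ 1, and let α be a (d, d+1)-coloring of P. Then for every pair of indices i, i' with i ≡ i' (mod d+1), we have α(v_i) = α(v_{i'}). In other words, the coloring is periodic with period d+1. -/
import Mathlib


/-- A (d,k)-coloring of the path on `n` vertices `v_0, …, v_{n-1}`
(distance between `v_i` and `v_j` is `|i - j|`). -/
def IsPathDKColoring (n d k : ℕ) (α : Fin n → Fin k) : Prop :=
  ∀ i j : Fin n, i ≠ j → Nat.dist i.val j.val ≤ d → α i ≠ α j

lemma step_lemma (n d : ℕ) (α : Fin n → Fin (d + 1))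
    (hα : IsPathDKColoring n d (d + 1) α) (i : ℕ) (h : i + (d + 1) < n) :
    α ⟨i, by omega⟩ = α ⟨i + (d + 1), h⟩ := by
  -- the window i+1 .. i+d+1 is injectively colored, hence surjective
  set g : Fin (d + 1) → Fin (d + 1) := fun j => α ⟨i + 1 + j.val, by omega⟩ with hg
  have hginj : Function.Injective g := by
    intro a b hab
    by_contra hne
    exact hα _ _ (by simp [Fin.ext_iff]; omega)
      (by simp [Nat.dist]; omega) hab
  have hgsurj : Function.Surjective g := Finite.surjective_of_injective hginj
  obtain ⟨j, hj⟩ := hgsurj (α ⟨i, by omega⟩)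
  have hjd : j.val = d := by
    by_contra hne
    have hjlt : j.val < d := lt_of_le_of_ne (Nat.lt_succ_iff.mp j.isLt) hne
    exact hα ⟨i + 1 + j.val, by omega⟩ ⟨i, by omega⟩
      (by simp [Fin.ext_iff]; omega) (by simp [Nat.dist]; omega) hj
  have : (⟨i + 1 + j.val, by omega⟩ : Fin n) = ⟨i + (d + 1), h⟩ := by
    simp [Fin.ext_iff]; omega
  rw [← hj, hg]
  simp only []
  rw [this]

theorem path_d_succ_coloring_periodic (n d : ℕ) (hd : 1 ≤ d)
    (α : Fin n → Fin (d + 1)) (hα : IsPathDKColoring n d (d + 1) α) :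
    ∀ i i' : Fin n, i.val % (d + 1) = i'.val % (d + 1) → α i = α i' := by
  have aux : ∀ m i (h : i + m * (d + 1) < n),
      α ⟨i, by omega⟩ = α ⟨i + m * (d + 1), h⟩ := by
    intro m
    induction m with
    | zero => intro i h; simp
    | succ m ih =>
      intro i h
      have h1 : i + (d + 1) + m * (d + 1) < n := by
        rw [show (m + 1) * (d + 1) = (d + 1) + m * (d + 1) from by ring] at h; omega
      have := ih (i + (d + 1)) h1
      rw [step_lemma n d α hα i (by omega), this]
      congr 1
      simp [Fin.ext_iff]; ring
  intro i i' hmod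
  have hi := i.isLt
  have hi' := i'.isLt
  rcases le_total i.val i'.val with hle | hle
  · obtain ⟨m, hm⟩ : ∃ m, i'.val = i.val + m * (d + 1) := by
      have hdvd : (d + 1) ∣ (i'.val - i.val) :=
        (Nat.modEq_iff_dvd' hle).mp hmod
      exact ⟨(i'.val - i.val) / (d + 1), by rw [Nat.div_mul_cancel hdvd]; omega⟩
    have hlt : i.val + m * (d + 1) < n := by omega
    have h2 : (⟨i.val + m * (d + 1), hlt⟩ : Fin n) = i' := Fin.ext hm.symm
    rw [← h2]
    exact aux m i.val hlt
  · obtain ⟨m, hm⟩ : ∃ m, i.val = i'.val + m * (d + 1) := by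
      have hdvd : (d + 1) ∣ (i.val - i'.val) :=
        (Nat.modEq_iff_dvd' hle).mp hmod.symm
      exact ⟨(i.val - i'.val) / (d + 1), by rw [Nat.div_mul_cancel hdvd]; omega⟩
    have hlt : i'.val + m * (d + 1) < n := by omega
    have h2 : (⟨i'.val + m * (d + 1), hlt⟩ : Fin n) = i := Fin.ext hm.symm
    rw [← h2]
    exact (aux m i'.val hlt).symm
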